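/- For each k ≥ 1 and r ≥ 1, if G is a connected r-regular claw-free graph of order n, then the graph G' obtained by replacing each vertex with a clique of size k+1 and each edge with a complete join between the corresponding cliques is a connected claw-free (kr+r+k)-regular graph of order (k+1)n with γ_{p,k}(G') = γ(G). -/

import Mathlib

open SimpleGraph

/-- Closed neighborhood of a set of vertices: `N[S]`. -/
def closedNbhd {V : Type*} (G : SimpleGraph V) (S : Set V) : Set V :=
  S ∪ {v | ∃ u ∈ S, G.Adj u v}

/-- The monitored sets `P^i(S)` of the k-power domination process:
`P^0(S) = N[S]`, `P^{i+1}(S) = ⋃ {N[v] : v ∈ P^i(S), |N[v] \ P^i(S)| ≤ k}`. -/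
def monitored {V : Type*} (G : SimpleGraph V) (k : ℕ) (S : Set V) : ℕ → Set V
  | 0 => closedNbhd G S
  | i + 1 => {w | ∃ v ∈ monitored G k S i,
      (closedNbhd G {v} \ monitored G k S i).ncard ≤ k ∧ w ∈ closedNbhd G {v}}

/-- `P^∞(S)`, realized as `P^{|V|}(S)` on a finite vertex type. -/
def monitoredInf {V : Type*} (G : SimpleGraph V) (k : ℕ) (S : Set V) : Set V :=
  monitored G k S (Nat.card V)

/-- `S` is a k-power dominating set. -/
def IsKPDS {V : Type*} (G : SimpleGraph V) (k : ℕ) (S : Set V) : Prop :=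
  monitoredInf G k S = Set.univ

/-- The k-power domination number `γ_{p,k}(G)`. -/
noncomputable def powerDomNumber {V : Type*} (G : SimpleGraph V) (k : ℕ) : ℕ :=
  sInf {m | ∃ S : Set V, S.Finite ∧ S.ncard = m ∧ IsKPDS G k S}

/-- A k-fort: a nonempty set `F` such that every vertex of `N(F) \ F`
has at least `k+1` neighbors in `F`. -/
def IsKFort {V : Type*} (G : SimpleGraph V) (k : ℕ) (F : Set V) : Prop :=
  F.Nonempty ∧ ∀ v ∈ closedNbhd G F \ F, k + 1 ≤ (G.neighborSet v ∩ F).ncard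

/-- Claw-free: no induced `K_{1,3}`. -/
def ClawFree {V : Type*} (G : SimpleGraph V) : Prop :=
  ∀ u a b c : V, G.Adj u a → G.Adj u b → G.Adj u c → a ≠ b → a ≠ c → b ≠ c →
    G.Adj a b ∨ G.Adj a c ∨ G.Adj b c

/-- `r`-regular. -/
def RegularOfDegree {V : Type*} (G : SimpleGraph V) (r : ℕ) : Prop :=
  ∀ v : V, (G.neighborSet v).ncard = r

/-- The domination number `γ(G)`. -/
noncomputable def domNumber {V : Type*} (G : SimpleGraph V) : ℕ :=
  sInf {m | ∃ S : Set V, S.Finite ∧ S.ncard = m ∧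
    ∀ v : V, v ∈ S ∨ ∃ u ∈ S, G.Adj v u}

/-- The total domination number `γ_t(G)`. -/
noncomputable def totalDomNumber {V : Type*} (G : SimpleGraph V) : ℕ :=
  sInf {m | ∃ S : Set V, S.Finite ∧ S.ncard = m ∧ ∀ v : V, ∃ u ∈ S, G.Adj v u}

/-- Replace each vertex of `G` by a clique of size `m`, and each edge by a complete
join between the corresponding cliques. -/
def cliqueExpansion {V : Type*} (G : SimpleGraph V) (m : ℕ) :
    SimpleGraph (V × Fin m) where
  Adj p p' := G.Adj p.1 p'.1 ∨ (p.1 = p'.1 ∧ p.2 ≠ p'.2)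
  symm := by
    constructor
    intro p p' h
    rcases h with h | ⟨h1, h2⟩
    · exact Or.inl h.symm
    · exact Or.inr ⟨h1.symm, h2.symm⟩
  loopless := by
    constructor
    intro p h
    rcases h with h | ⟨_, h2⟩
    · exact G.ne_of_adj h rfl
    · exact h2 rfl


section Helpers

variable {V : Type*} (G : SimpleGraph V) (k : ℕ)

lemma ncard_sprod {A B : Type*} (s : Set A) (t : Set B) :
    (s ×ˢ t).ncard = s.ncard * t.ncard := by
  rw [← Nat.card_coe_set_eq, ← Nat.card_coe_set_eq, ← Nat.card_coe_set_eq,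
    Nat.card_congr (Equiv.Set.prod s t), Nat.card_prod]

lemma closedNbhd_saturated {S : Set (V × Fin (k + 1))} {p q : V × Fin (k + 1)}
    (hp : p ∈ closedNbhd (cliqueExpansion G (k + 1)) S) (hq : q.1 = p.1) :
    q ∈ closedNbhd (cliqueExpansion G (k + 1)) S := by
  rcases hp with hp | ⟨u, hu, hadj⟩
  · by_cases hqp : q = p
    · exact Or.inl (hqp ▸ hp)
    · refine Or.inr ⟨p, hp, Or.inr ⟨hq.symm, ?_⟩⟩
      intro h2
      exact hqp (Prod.ext hq h2.symm)
  · rcases hadj with hadj | ⟨h1, h2⟩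
    · exact Or.inr ⟨u, hu, Or.inl (hq ▸ hadj)⟩
    · by_cases hqu : q = u
      · exact Or.inl (hqu ▸ hu)
      · refine Or.inr ⟨u, hu, Or.inr ⟨h1.trans hq.symm, ?_⟩⟩
        intro h3
        exact hqu (Prod.ext ((h1.trans hq.symm).symm) h3.symm)

lemma clique_ncard (w : V) : {p : V × Fin (k + 1) | p.1 = w}.ncard = k + 1 := by
  have h : {p : V × Fin (k + 1) | p.1 = w} = (fun j : Fin (k + 1) => (w, j)) '' Set.univ := by
    ext ⟨a, b⟩
    simp only [Set.mem_setOf_eq, Set.image_univ, Set.mem_range]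
    constructor
    · rintro rfl; exact ⟨b, rfl⟩
    · rintro ⟨j, hj⟩; exact (congrArg Prod.fst hj).symm
  rw [h, Set.ncard_image_of_injective _ (fun a b h => congrArg Prod.snd h),
    Set.ncard_univ, Nat.card_eq_fintype_card, Fintype.card_fin]

lemma monitored_subset_closedNbhd [Finite V] (S : Set (V × Fin (k + 1))) (i : ℕ) :
    monitored (cliqueExpansion G (k + 1)) k S i ⊆ closedNbhd (cliqueExpansion G (k + 1)) S := by
  induction i with
  | zero => exact subset_rfl
  | succ i ih =>
    rintro w ⟨v, hv, hc, hw⟩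
    have hNv : closedNbhd (cliqueExpansion G (k + 1)) {v} ⊆
        closedNbhd (cliqueExpansion G (k + 1)) S := by
      intro p hp
      by_contra hpS
      have hclique : {q : V × Fin (k + 1) | q.1 = p.1} ⊆
          closedNbhd (cliqueExpansion G (k + 1)) {v} \
            monitored (cliqueExpansion G (k + 1)) k S i := by
        intro q hq
        refine ⟨closedNbhd_saturated G k hp hq, fun hqm => ?_⟩
        exact hpS (closedNbhd_saturated G k (ih hqm) hq.symm)
      have h1 : (k : ℕ) + 1 ≤ (closedNbhd (cliqueExpansion G (k + 1)) {v} \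
          monitored (cliqueExpansion G (k + 1)) k S i).ncard := by
        calc (k : ℕ) + 1 = {q : V × Fin (k + 1) | q.1 = p.1}.ncard :=
              (clique_ncard (V := V) k p.1).symm
          _ ≤ _ := Set.ncard_le_ncard hclique (Set.toFinite _)
      omega
    exact hNv hw

lemma monitored_univ_of_closedNbhd_univ {W : Type*} (H : SimpleGraph W) (S : Set W)
    (h : closedNbhd H S = Set.univ) (i : ℕ) : monitored H k S i = Set.univ := by
  induction i with
  | zero => exact h
  | succ i ih =>
    ext w
    simp only [Set.mem_univ, iff_true]
    refine ⟨w, by rw [ih]; trivial, ?_, Or.inl rfl⟩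
    rw [ih, Set.diff_univ, Set.ncard_empty]
    omega

lemma isKPDS_iff_closedNbhd [Finite V] (S : Set (V × Fin (k + 1))) :
    IsKPDS (cliqueExpansion G (k + 1)) k S ↔
      closedNbhd (cliqueExpansion G (k + 1)) S = Set.univ := by
  constructor
  · intro h
    have h2 := monitored_subset_closedNbhd G k S (Nat.card (V × Fin (k + 1)))
    rw [show monitored (cliqueExpansion G (k + 1)) k S (Nat.card (V × Fin (k + 1))) =
        monitoredInf (cliqueExpansion G (k + 1)) k S from rfl, h] at h2
    exact Set.eq_univ_of_univ_subset h2
  · intro h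
    exact monitored_univ_of_closedNbhd_univ k _ S h _

end Helpers


theorem cliqueExpansion_powerDomNumber {V : Type*} [Finite V] (G : SimpleGraph V)
    (k r : ℕ) (hk : 1 ≤ k) (hr : 1 ≤ r) (hconn : G.Connected) (hcf : ClawFree G)
    (hreg : RegularOfDegree G r) :
    (cliqueExpansion G (k + 1)).Connected ∧
    ClawFree (cliqueExpansion G (k + 1)) ∧
    RegularOfDegree (cliqueExpansion G (k + 1)) (k * r + r + k) ∧
    Nat.card (V × Fin (k + 1)) = (k + 1) * Nat.card V ∧
    powerDomNumber (cliqueExpansion G (k + 1)) k = domNumber G := by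
  classical
  have hVne : Nonempty V := hconn.nonempty
  set G' := cliqueExpansion G (k + 1) with hG'
  refine ⟨?_, ?_, ?_, ?_, ?_⟩
  -- Connectivity
  · rw [connected_iff]
    refine ⟨?_, ⟨⟨Classical.arbitrary V, 0⟩⟩⟩
    intro p q
    have hlift : ∀ x y : V, G.Reachable x y → G'.Reachable (x, 0) (y, 0) := by
      intro x y hxy
      obtain ⟨w⟩ := hxy
      induction w with
      | nil => exact Reachable.refl _
      | cons h _ ih => exact (show G'.Adj (_, 0) (_, 0) from Or.inl h).reachable.trans ih
    have h1 : G'.Reachable (p.1, 0) (q.1, 0) := hlift _ _ (hconn.preconnected p.1 q.1)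
    have h2 : G'.Reachable p (p.1, 0) := by
      rcases eq_or_ne p.2 0 with h | h
      · rw [show p = (p.1, (0 : Fin (k + 1))) from Prod.ext rfl h]
      · exact (show G'.Adj p (p.1, 0) from Or.inr ⟨rfl, h⟩).reachable
    have h3 : G'.Reachable (q.1, 0) q := by
      rcases eq_or_ne q.2 0 with h | h
      · rw [show q = (q.1, (0 : Fin (k + 1))) from Prod.ext rfl h]
      · exact (show G'.Adj (q.1, 0) q from Or.inr ⟨rfl, fun hh => h hh.symm⟩).reachable
    exact (h2.trans h1).trans h3
  -- Claw-freeness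
  · intro u a b c hua hub huc hab hac hbc
    by_contra hcon
    push_neg at hcon
    obtain ⟨h1, h2, h3⟩ := hcon
    have key : ∀ x y : V × Fin (k + 1), x ≠ y → ¬ G'.Adj x y → x.1 ≠ y.1 := by
      intro x y hxy hadj h
      exact hadj (Or.inr ⟨h, fun h2 => hxy (Prod.ext h h2)⟩)
    have hab1 := key a b hab h1
    have hac1 := key a c hac h2
    have hbc1 := key b c hbc h3
    have ha : G.Adj u.1 a.1 := by
      rcases hua with h | ⟨h, _⟩
      · exact h
      · rcases hub with h' | ⟨h', _⟩
        · exact absurd (Or.inl (h ▸ h' : G.Adj a.1 b.1)) h1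
        · exact absurd (h.symm.trans h') hab1
    have hb : G.Adj u.1 b.1 := by
      rcases hub with h | ⟨h, _⟩
      · exact h
      · exact absurd (G'.adj_symm (Or.inl (h ▸ ha : G.Adj b.1 a.1) : G'.Adj b a)) h1
    have hc : G.Adj u.1 c.1 := by
      rcases huc with h | ⟨h, _⟩
      · exact h
      · exact absurd (G'.adj_symm (Or.inl (h ▸ ha : G.Adj c.1 a.1) : G'.Adj c a)) h2
    rcases hcf u.1 a.1 b.1 c.1 ha hb hc hab1 hac1 hbc1 with h | h | h
    · exact h1 (Or.inl h)
    · exact h2 (Or.inl h)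
    · exact h3 (Or.inl h)
  -- Regularity
  · rintro ⟨u, i⟩
    have hset : G'.neighborSet (u, i) =
        (G.neighborSet u ×ˢ (Set.univ : Set (Fin (k + 1)))) ∪ ({u} ×ˢ ({i}ᶜ)) := by
      ext ⟨w, j⟩
      simp only [mem_neighborSet, Set.mem_union, Set.mem_prod, Set.mem_univ, and_true,
        Set.mem_singleton_iff, Set.mem_compl_iff]
      constructor
      · rintro (h | ⟨h, h'⟩)
        · exact Or.inl h
        · exact Or.inr ⟨h.symm, fun hj => h' hj.symm⟩
      · rintro (h | ⟨h, h'⟩)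
        · exact Or.inl h
        · exact Or.inr ⟨h.symm, fun hj => h' hj.symm⟩
    have hdisj : Disjoint (G.neighborSet u ×ˢ (Set.univ : Set (Fin (k + 1))))
        (({u} : Set V) ×ˢ ({i}ᶜ)) := by
      rw [Set.disjoint_left]
      rintro ⟨w, j⟩ ⟨h, -⟩ ⟨h', -⟩
      simp only [Set.mem_singleton_iff] at h'
      exact G.loopless.irrefl u (h' ▸ h)
    rw [hset, Set.ncard_union_eq hdisj (Set.toFinite _) (Set.toFinite _),
      ncard_sprod, ncard_sprod, hreg u, Set.ncard_univ, Set.ncard_singleton,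
      Nat.card_eq_fintype_card, Fintype.card_fin]
    have hcompl : ({i}ᶜ : Set (Fin (k + 1))).ncard = k := by
      rw [Set.compl_eq_univ_diff, Set.ncard_diff (Set.subset_univ _), Set.ncard_univ,
        Set.ncard_singleton, Nat.card_eq_fintype_card, Fintype.card_fin]
      omega
    rw [hcompl]
    ring
  -- Cardinality
  · rw [Nat.card_prod, Nat.card_eq_fintype_card (α := Fin (k + 1)), Fintype.card_fin,
      Nat.mul_comm]
  -- Power domination number
  · have hdomne : {m | ∃ S : Set V, S.Finite ∧ S.ncard = m ∧
        ∀ v : V, v ∈ S ∨ ∃ u ∈ S, G.Adj v u}.Nonempty :=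
      ⟨_, Set.univ, Set.toFinite _, rfl, fun v => Or.inl trivial⟩
    have hpowne : {m | ∃ S : Set (V × Fin (k + 1)), S.Finite ∧ S.ncard = m ∧
        IsKPDS G' k S}.Nonempty := by
      refine ⟨_, Set.univ, Set.toFinite _, rfl, ?_⟩
      exact (isKPDS_iff_closedNbhd G k _).mpr
        (Set.eq_univ_of_univ_subset Set.subset_union_left)
    apply le_antisymm
    · -- powerDomNumber ≤ domNumber
      obtain ⟨S, hSfin, hScard, hSdom⟩ := Nat.sInf_mem hdomne
      set S' : Set (V × Fin (k + 1)) := (fun w => (w, (0 : Fin (k + 1)))) '' S with hS'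
      have hinj : Function.Injective (fun w : V => (w, (0 : Fin (k + 1)))) :=
        fun a b h => congrArg Prod.fst h
      have hKP : IsKPDS G' k S' := by
        rw [isKPDS_iff_closedNbhd]
        ext ⟨w, j⟩
        simp only [Set.mem_univ, iff_true]
        rcases hSdom w with hw | ⟨v, hv, hadj⟩
        · rcases eq_or_ne j 0 with hj | hj
          · exact Or.inl ⟨w, hw, by rw [hj]⟩
          · exact Or.inr ⟨(w, 0), ⟨w, hw, rfl⟩, Or.inr ⟨rfl, fun h => hj h.symm⟩⟩
        · exact Or.inr ⟨(v, 0), ⟨v, hv, rfl⟩, Or.inl hadj.symm⟩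
      have hle : powerDomNumber G' k ≤ S'.ncard :=
        Nat.sInf_le ⟨S', hSfin.image _, rfl, hKP⟩
      rwa [hS', Set.ncard_image_of_injective _ hinj, hScard] at hle
    · -- domNumber ≤ powerDomNumber
      obtain ⟨S', hfin, hcard, hKP⟩ := Nat.sInf_mem hpowne
      have hN := (isKPDS_iff_closedNbhd G k S').mp hKP
      set D : Set V := Prod.fst '' S' with hD
      have hdom : ∀ v : V, v ∈ D ∨ ∃ u ∈ D, G.Adj v u := by
        intro w
        have hw : ((w, (0 : Fin (k + 1))) : V × Fin (k + 1)) ∈ closedNbhd G' S' := by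
          rw [hN]; trivial
        rcases hw with hw | ⟨⟨v, jv⟩, hv, hadj⟩
        · exact Or.inl ⟨_, hw, rfl⟩
        · rcases hadj with hadj | ⟨heq, -⟩
          · exact Or.inr ⟨v, ⟨_, hv, rfl⟩, hadj.symm⟩
          · have hvw : v = w := heq
            exact Or.inl (hvw ▸ (⟨(v, jv), hv, rfl⟩ : v ∈ D))
      have hle : domNumber G ≤ D.ncard :=
        Nat.sInf_le ⟨D, hfin.image _, rfl, hdom⟩
      calc domNumber G ≤ D.ncard := hle
        _ ≤ S'.ncard := Set.ncard_image_le hfin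
        _ = powerDomNumber G' k := hcard
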